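/- For any unit vector x ∈ R^{kd}, if x is written as the concatenation of k blocks x₁,…,x_k ∈ R^d, then for any matrix Q ∈ R^{m×d}, ‖(I_k ⊗ Q)x‖₂² = Σᵢ ‖Q xᵢ‖₂². Consequently, if a random matrix Q ∈ R^{m×d} has the (ε,δ,p)-JL moment property, then I_k ⊗ Q ∈ R^{km×kd} also has the (ε,δ,p)-JL moment property. -/

import Mathlib

open MeasureTheory ProbabilityTheory Finset Kronecker

private lemma jl_kron_entry {k m d : ℕ} (B : Matrix (Fin m) (Fin d) ℝ)
    (x : Fin k × Fin d → ℝ) (j : Fin k) (i : Fin m) :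
    ((1 : Matrix (Fin k) (Fin k) ℝ) ⊗ₖ B).mulVec x (j, i)
      = B.mulVec (fun t => x (j, t)) i := by
  simp [Matrix.mulVec, dotProduct, Fintype.sum_prod_type, Matrix.one_apply,
    ite_mul, zero_mul, Finset.sum_ite_eq, mul_assoc]

private lemma jl_kron_split {k m d : ℕ} (B : Matrix (Fin m) (Fin d) ℝ)
    (x : Fin k × Fin d → ℝ) :
    ∑ q : Fin k × Fin m, (((1 : Matrix (Fin k) (Fin k) ℝ) ⊗ₖ B).mulVec x q) ^ 2
      = ∑ j : Fin k, ∑ i : Fin m, (B.mulVec (fun t => x (j, t)) i) ^ 2 := by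
  rw [Fintype.sum_prod_type]
  exact Finset.sum_congr rfl fun j _ => Finset.sum_congr rfl fun i _ => by
    rw [jl_kron_entry]

private lemma jl_convex_comb {Ω : Type*} [MeasureSpace Ω] [IsProbabilityMeasure (ℙ : Measure Ω)]
    {m d k : ℕ} (Q : Ω → Matrix (Fin m) (Fin d) ℝ)
    (ε δ p : ℝ) (hε : 0 < ε) (hδ : 0 < δ) (hp : 1 ≤ p)
    (hmean : ∀ y : Fin d → ℝ, ∑ j, y j ^ 2 = 1 →
      (∫ ω, ∑ i, ((Q ω).mulVec y i) ^ 2) = 1)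
    (hmom : ∀ y : Fin d → ℝ, ∑ j, y j ^ 2 = 1 →
      (∫ ω, |∑ i, ((Q ω).mulVec y i) ^ 2 - 1| ^ p) ^ (1 / p) ≤ ε * δ ^ (1 / p))
    (c : Fin k → ℝ) (y : Fin k → Fin d → ℝ)
    (hc : ∀ j, 0 ≤ c j) (hcs : ∑ j, c j = 1)
    (hy : ∀ j, c j ≠ 0 → ∑ t, y j t ^ 2 = 1) :
    (∫ ω, ∑ j, c j * ∑ i, ((Q ω).mulVec (y j) i) ^ 2) = 1 ∧
    (∫ ω, |(∑ j, c j * ∑ i, ((Q ω).mulVec (y j) i) ^ 2) - 1| ^ p) ^ (1 / p)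
      ≤ ε * δ ^ (1 / p) := by
  have hp0 : 0 < p := lt_of_lt_of_le one_pos hp
  set g : Fin k → Ω → ℝ := fun j ω => ∑ i, ((Q ω).mulVec (y j) i) ^ 2 with hg
  set f : Fin k → Ω → ℝ := fun j ω => c j * g j ω with hf
  have hgnn : ∀ j ω, 0 ≤ g j ω := fun j ω => Finset.sum_nonneg fun i _ => sq_nonneg _
  -- integrability of g j when c j ≠ 0
  have hgint : ∀ j, c j ≠ 0 → Integrable (g j) ℙ := by
    intro j hj
    by_contra h
    have h1 := hmean (y j) (hy j hj)
    rw [integral_undef h] at h1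
    exact one_ne_zero h1.symm
  have hfint : ∀ j, Integrable (f j) ℙ := by
    intro j
    by_cases hj : c j = 0
    · have : f j = fun _ => 0 := by funext ω; simp [hf, hj]
      rw [this]; exact integrable_const 0
    · exact (hgint j hj).const_mul _
  have hmean' : (∫ ω, ∑ j, f j ω) = 1 := by
    rw [integral_finset_sum _ (fun j _ => hfint j)]
    have : ∀ j ∈ Finset.univ, (∫ ω, f j ω) = c j := by
      intro j _
      by_cases hj : c j = 0
      · simp [hf, hj]
      · rw [hf]
        simp only
        rw [integral_const_mul, hmean (y j) (hy j hj), mul_one]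
    rw [Finset.sum_congr rfl this, hcs]
  constructor
  · exact hmean'
  -- moment bound
  set F : Ω → ℝ := fun ω => ∑ j, f j ω with hF
  by_cases hI : Integrable (fun ω => |F ω - 1| ^ p) ℙ
  · -- the Lᵖ case
    have hq0 : (ENNReal.ofReal p) ≠ 0 := by
      simp [ENNReal.ofReal_eq_zero, not_le, hp0]
    have hqt : (ENNReal.ofReal p) ≠ ⊤ := ENNReal.ofReal_ne_top
    have hqtr : (ENNReal.ofReal p).toReal = p := ENNReal.toReal_ofReal hp0.le
    have hFint : Integrable F ℙ := integrable_finset_sum _ (fun j _ => hfint j)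
    have hFm : AEStronglyMeasurable F ℙ := hFint.aestronglyMeasurable
    have hhm : AEStronglyMeasurable (fun ω => F ω - 1) ℙ :=
      hFm.sub aestronglyMeasurable_const
    have hmemh : MemLp (fun ω => F ω - 1) (ENNReal.ofReal p) ℙ := by
      apply (memLp_norm_rpow_iff (p := ENNReal.ofReal p) (q := ENNReal.ofReal p)
        hhm hq0 hqt).mp
      rw [ENNReal.div_self hq0 hqt, memLp_one_iff_integrable]
      have : (fun ω => ‖F ω - 1‖ ^ (ENNReal.ofReal p).toReal)
          = fun ω => |F ω - 1| ^ p := by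
        funext ω; rw [hqtr, Real.norm_eq_abs]
      rw [this]
      exact hI
    have hFLp : MemLp F (ENNReal.ofReal p) ℙ := by
      have : F = (fun ω => F ω - 1) + fun _ => (1 : ℝ) := by funext ω; simp
      rw [this]
      exact hmemh.add (memLp_const 1)
    -- each normalized block is in Lᵖ
    have hgLp : ∀ j, c j ≠ 0 → MemLp (g j) (ENNReal.ofReal p) ℙ := by
      intro j hj
      have hcj : 0 < c j := lt_of_le_of_ne (hc j) (Ne.symm hj)
      refine MemLp.of_le (hFLp.const_smul ((c j)⁻¹)) (hgint j hj).aestronglyMeasurable ?_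
      filter_upwards with ω
      have h1 : c j * g j ω ≤ F ω := by
        rw [hF]
        exact Finset.single_le_sum (f := fun j => f j ω)
          (fun i _ => mul_nonneg (hc i) (hgnn i ω)) (Finset.mem_univ j)
      have h2 : g j ω ≤ (c j)⁻¹ * F ω := by
        rw [le_inv_mul_iff₀ hcj]; exact h1
      have h3 : (0:ℝ) ≤ (c j)⁻¹ * F ω := le_trans (hgnn j ω) h2
      rw [Real.norm_eq_abs, Real.norm_eq_abs, abs_of_nonneg (hgnn j ω)]
      calc g j ω ≤ (c j)⁻¹ * F ω := h2
        _ ≤ |(c j)⁻¹ * F ω| := le_abs_self _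
        _ = |((c j)⁻¹ • F) ω| := by simp [smul_eq_mul]
    -- per-block eLpNorm bound
    have hblock : ∀ j, c j ≠ 0 →
        eLpNorm (fun ω => g j ω - 1) (ENNReal.ofReal p) ℙ
          ≤ ENNReal.ofReal (ε * δ ^ (1 / p)) := by
      intro j hj
      have hmem : MemLp (fun ω => g j ω - 1) (ENNReal.ofReal p) ℙ :=
        (hgLp j hj).sub (memLp_const 1)
      rw [hmem.eLpNorm_eq_integral_rpow_norm hq0 hqt]
      apply ENNReal.ofReal_le_ofReal
      have := hmom (y j) (hy j hj)
      rw [hqtr]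
      calc (∫ ω, ‖g j ω - 1‖ ^ p) ^ p⁻¹
          = (∫ ω, |g j ω - 1| ^ p) ^ (1/p) := by
            rw [one_div]; simp only [Real.norm_eq_abs]
        _ ≤ ε * δ ^ (1 / p) := this
    -- decompose F - 1 as a sum
    have hdecomp : (fun ω => F ω - 1) = ∑ j, fun ω => f j ω - c j := by
      funext ω
      rw [Finset.sum_apply]
      simp only [hF]
      rw [Finset.sum_sub_distrib, hcs]
    have hterm : ∀ j, (fun ω => f j ω - c j) = c j • (fun ω => g j ω - 1) := by
      intro j
      funext ω
      simp [hf, smul_eq_mul, mul_sub]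
    have hsum : eLpNorm (fun ω => F ω - 1) (ENNReal.ofReal p) ℙ
        ≤ ENNReal.ofReal (ε * δ ^ (1 / p)) := by
      rw [hdecomp]
      calc eLpNorm (∑ j, fun ω => f j ω - c j) (ENNReal.ofReal p) ℙ
          ≤ ∑ j, eLpNorm (fun ω => f j ω - c j) (ENNReal.ofReal p) ℙ := by
            apply eLpNorm_sum_le
            · intro j _
              exact (hfint j).aestronglyMeasurable.sub aestronglyMeasurable_const
            · exact ENNReal.one_le_ofReal.mpr hp
        _ ≤ ∑ j, ENNReal.ofReal (c j) * ENNReal.ofReal (ε * δ ^ (1 / p)) := by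
            apply Finset.sum_le_sum
            intro j _
            rw [hterm j, eLpNorm_const_smul]
            by_cases hj : c j = 0
            · simp [hj]
            · rw [Real.enorm_eq_ofReal (hc j)]
              exact mul_le_mul_right (hblock j hj) _
        _ = ENNReal.ofReal (ε * δ ^ (1 / p)) := by
            rw [← Finset.sum_mul, ← ENNReal.ofReal_sum_of_nonneg (fun j _ => hc j), hcs,
              ENNReal.ofReal_one, one_mul]
    -- conclude
    have hfinal := hmemh.eLpNorm_eq_integral_rpow_norm hq0 hqt
    rw [hfinal] at hsum
    rw [ENNReal.ofReal_le_ofReal_iff (by positivity)] at hsum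
    calc (∫ ω, |F ω - 1| ^ p) ^ (1/p)
        = (∫ ω, ‖F ω - 1‖ ^ (ENNReal.ofReal p).toReal) ^ (ENNReal.ofReal p).toReal⁻¹ := by
          rw [hqtr, one_div]; simp only [Real.norm_eq_abs]
      _ ≤ ε * δ ^ (1 / p) := hsum
  · rw [integral_undef hI, Real.zero_rpow (one_div_ne_zero hp0.ne')]
    positivity


/-- For any unit `x ∈ ℝ^{kd}` split into `k` blocks, `‖(I_k ⊗ Q)x‖₂² = Σⱼ ‖Q xⱼ‖₂²`;
consequently if a random `Q` has the `(ε,δ,p)`-JL moment property, so does `I_k ⊗ Q`. -/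
theorem stmt4 {Ω : Type*} [MeasureSpace Ω] [IsProbabilityMeasure (ℙ : Measure Ω)]
    {k m d : ℕ} (Q : Ω → Matrix (Fin m) (Fin d) ℝ)
    (ε δ p : ℝ) (hε : 0 < ε) (hδ : 0 < δ) (hp : 1 ≤ p)
    (hmean : ∀ y : Fin d → ℝ, ∑ j, y j ^ 2 = 1 →
      (∫ ω, ∑ i, ((Q ω).mulVec y i) ^ 2) = 1)
    (hmom : ∀ y : Fin d → ℝ, ∑ j, y j ^ 2 = 1 →
      (∫ ω, |∑ i, ((Q ω).mulVec y i) ^ 2 - 1| ^ p) ^ (1 / p) ≤ ε * δ ^ (1 / p)) :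
    (∀ (B : Matrix (Fin m) (Fin d) ℝ) (x : Fin k × Fin d → ℝ), ∑ q, x q ^ 2 = 1 →
      ∑ q : Fin k × Fin m, (((1 : Matrix (Fin k) (Fin k) ℝ) ⊗ₖ B).mulVec x q) ^ 2
        = ∑ j : Fin k, ∑ i : Fin m, (B.mulVec (fun t => x (j, t)) i) ^ 2)
    ∧
    (∀ x : Fin k × Fin d → ℝ, ∑ q, x q ^ 2 = 1 →
      (∫ ω, ∑ q : Fin k × Fin m,
          (((1 : Matrix (Fin k) (Fin k) ℝ) ⊗ₖ Q ω).mulVec x q) ^ 2) = 1 ∧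
      (∫ ω, |(∑ q : Fin k × Fin m,
          (((1 : Matrix (Fin k) (Fin k) ℝ) ⊗ₖ Q ω).mulVec x q) ^ 2) - 1| ^ p) ^ (1 / p)
        ≤ ε * δ ^ (1 / p)) := by
  refine ⟨fun B x _ => jl_kron_split B x, fun x hx => ?_⟩
  set c : Fin k → ℝ := fun j => ∑ t, x (j, t) ^ 2 with hcdef
  set y : Fin k → Fin d → ℝ := fun j t => x (j, t) / Real.sqrt (c j) with hydef
  have hc : ∀ j, 0 ≤ c j := fun j => Finset.sum_nonneg fun t _ => sq_nonneg _
  have hcs : ∑ j, c j = 1 := by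
    rw [← hx, Fintype.sum_prod_type]
  have hy : ∀ j, c j ≠ 0 → ∑ t, y j t ^ 2 = 1 := by
    intro j hj
    simp only [hydef, div_pow]
    rw [← Finset.sum_div, Real.sq_sqrt (hc j)]
    exact div_self hj
  have hxy : ∀ j, c j ≠ 0 → (fun t => x (j, t)) = Real.sqrt (c j) • y j := by
    intro j hj
    funext t
    have hs : Real.sqrt (c j) ≠ 0 := by
      simp [Real.sqrt_eq_zero', hj, not_le, lt_of_le_of_ne (hc j) (Ne.symm hj)]
    simp only [hydef, Pi.smul_apply, smul_eq_mul]
    field_simp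
  have hblocksq : ∀ (B : Matrix (Fin m) (Fin d) ℝ) (j : Fin k),
      ∑ i, (B.mulVec (fun t => x (j, t)) i) ^ 2
        = c j * ∑ i, (B.mulVec (y j) i) ^ 2 := by
    intro B j
    by_cases hj : c j = 0
    · have hz : ∀ t, x (j, t) = 0 := by
        intro t
        have := (Finset.sum_eq_zero_iff_of_nonneg
          (fun t _ => sq_nonneg (x (j, t)))).mp hj t (Finset.mem_univ t)
        exact pow_eq_zero_iff (n := 2) (by norm_num) |>.mp this
      have : (fun t => x (j, t)) = (0 : Fin d → ℝ) := funext hz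
      rw [this, hj, zero_mul]
      simp [Matrix.mulVec_zero]
    · rw [hxy j hj]
      rw [Matrix.mulVec_smul]
      rw [Finset.mul_sum]
      refine Finset.sum_congr rfl fun i _ => ?_
      simp only [Pi.smul_apply, smul_eq_mul]
      rw [mul_pow, Real.sq_sqrt (hc j)]
  have hrw : ∀ ω, (∑ q : Fin k × Fin m,
      (((1 : Matrix (Fin k) (Fin k) ℝ) ⊗ₖ Q ω).mulVec x q) ^ 2)
        = ∑ j, c j * ∑ i, ((Q ω).mulVec (y j) i) ^ 2 := by
    intro ω
    rw [jl_kron_split]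
    exact Finset.sum_congr rfl fun j _ => hblocksq (Q ω) j
  have hmain := jl_convex_comb Q ε δ p hε hδ hp hmean hmom c y hc hcs hy
  constructor
  · rw [show (fun ω => ∑ q : Fin k × Fin m,
        (((1 : Matrix (Fin k) (Fin k) ℝ) ⊗ₖ Q ω).mulVec x q) ^ 2)
      = fun ω => ∑ j, c j * ∑ i, ((Q ω).mulVec (y j) i) ^ 2 from funext hrw]
    exact hmain.1
  · rw [show (fun ω => |(∑ q : Fin k × Fin m,
        (((1 : Matrix (Fin k) (Fin k) ℝ) ⊗ₖ Q ω).mulVec x q) ^ 2) - 1| ^ p)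
      = fun ω => |(∑ j, c j * ∑ i, ((Q ω).mulVec (y j) i) ^ 2) - 1| ^ p from
        funext fun ω => by rw [hrw]]
    exact hmain.2
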